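/- Norm of the extended approximation operator via the extended bilinear form: let P : V → S be linear and suppose there exists a bounded bilinear form β : X × S → ℝ with β(s,σ) = b(s,σ) for s, σ ∈ S and β(v,σ) = b(P v, σ) for v ∈ V, σ ∈ S, and let P̄ : X → X be the associated bounded linear projection onto S extending P. Then ‖P̄‖ = sup_{σ ∈ S, σ ≠ 0} [ (sup_{x ∈ X, ‖x‖ = 1} β(x,σ)) / (sup_{s ∈ S, ‖s‖ = 1} b(s,σ)) ], where ‖P̄‖ is the operator norm of P̄ on X. -/

import Mathlib

set_option maxHeartbeats 1000000

/-- The sup of a real continuous linear functional over the unit sphere equals its norm. -/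
lemma sSup_sphere_apply_eq_norm' {E : Type*} [NormedAddCommGroup E] [NormedSpace ℝ E]
    [Nontrivial E] (f : E →L[ℝ] ℝ) :
    sSup {c : ℝ | ∃ x : E, ‖x‖ = 1 ∧ c = f x} = ‖f‖ := by
  set A := {c : ℝ | ∃ x : E, ‖x‖ = 1 ∧ c = f x} with hA
  obtain ⟨x₀, hx₀⟩ := exists_norm_eq E (zero_le_one)
  have hne : A.Nonempty := ⟨f x₀, x₀, hx₀, rfl⟩
  have hbdd : BddAbove A := by
    refine ⟨‖f‖, ?_⟩
    rintro c ⟨x, hx, rfl⟩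
    calc f x ≤ |f x| := le_abs_self _
      _ ≤ ‖f‖ * ‖x‖ := f.le_opNorm x
      _ = ‖f‖ := by rw [hx, mul_one]
  have habs : ∀ x : E, ‖x‖ = 1 → |f x| ≤ sSup A := by
    intro x hx
    have h1 : f x ≤ sSup A := le_csSup hbdd ⟨x, hx, rfl⟩
    have h2 : f (-x) ≤ sSup A := le_csSup hbdd ⟨-x, by simpa using hx, rfl⟩
    rw [map_neg] at h2
    exact abs_le.mpr ⟨by linarith, h1⟩
  refine le_antisymm (csSup_le hne ?_) ?_
  · rintro c ⟨x, hx, rfl⟩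
    calc f x ≤ |f x| := le_abs_self _
      _ ≤ ‖f‖ * ‖x‖ := f.le_opNorm x
      _ = ‖f‖ := by rw [hx, mul_one]
  · refine f.opNorm_le_bound ((abs_nonneg _).trans (habs x₀ hx₀)) (fun x => ?_)
    rcases eq_or_ne x 0 with rfl | hx
    · simp
    · have hu : ‖(‖x‖⁻¹ : ℝ) • x‖ = 1 := norm_smul_inv_norm hx
      have := habs _ hu
      rw [map_smul, smul_eq_mul, abs_mul, abs_inv, abs_norm] at this
      have hxpos : (0:ℝ) < ‖x‖ := norm_pos_iff.mpr hx
      rw [Real.norm_eq_abs]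
      calc |f x| = ‖x‖ * (‖x‖⁻¹ * |f x|) := by field_simp
        _ ≤ ‖x‖ * sSup A := mul_le_mul_of_nonneg_left this hxpos.le
        _ = sSup A * ‖x‖ := mul_comm _ _

/-- **Norms of extensions.** Let `P : V → S` be linear, `β : X × S → ℝ` a bounded common
extension of `b` and `(v,σ) ↦ b(P v, σ)`, and `P̄ : X → X` the associated bounded linear
projection onto `S` extending `P`. Then
`‖P̄‖ = sup_{σ ≠ 0} (sup_{‖x‖=1} β(x,σ)) / (sup_{‖s‖=1} b(s,σ))`. -/
theorem norm_extended_projection_eq_sup_ratio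
    {X : Type*} [NormedAddCommGroup X] [InnerProductSpace ℝ X] [CompleteSpace X]
    (V S : Submodule ℝ X) [CompleteSpace V] [FiniteDimensional ℝ S]
    (hSne : S ≠ ⊥) (hsum : V ⊔ S = ⊤)
    (b : S →ₗ[ℝ] S →ₗ[ℝ] ℝ) (hb : ∀ s : S, (∀ σ : S, b s σ = 0) → s = 0)
    (P : V →ₗ[ℝ] S)
    (β : X →ₗ[ℝ] S →ₗ[ℝ] ℝ)
    (hβbdd : ∃ K : ℝ, ∀ (x : X) (σ : S), |β x σ| ≤ K * ‖x‖ * ‖σ‖)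
    (hβS : ∀ s σ : S, β (s : X) σ = b s σ)
    (hβV : ∀ (v : V) (σ : S), β (v : X) σ = b (P v) σ)
    (Pbar : X →L[ℝ] X)
    (hproj : ∀ x : X, Pbar (Pbar x) = Pbar x)
    (hrangebar : Set.range Pbar = (S : Set X))
    (hext : ∀ v : V, Pbar v = (P v : X)) :
    ‖Pbar‖ = sSup {r : ℝ | ∃ σ : S, σ ≠ 0 ∧
        r = sSup {c : ℝ | ∃ x : X, ‖x‖ = 1 ∧ c = β x σ} /
          sSup {c : ℝ | ∃ s : S, ‖s‖ = 1 ∧ c = b s σ}} := by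
  classical
  haveI : Nontrivial S := Submodule.nontrivial_iff_ne_bot.mpr hSne
  obtain ⟨σ₀, hσ₀⟩ := exists_ne (0 : S)
  haveI : Nontrivial X := ⟨⟨(σ₀ : X), 0, fun h => hσ₀ (by exact_mod_cast Subtype.ext h)⟩⟩
  have hmem : ∀ x : X, Pbar x ∈ S := fun x => by
    have h : Pbar x ∈ Set.range Pbar := Set.mem_range_self x
    rwa [hrangebar] at h
  set Q : X →L[ℝ] S := Pbar.codRestrict S hmem with hQdef
  have hQ : ∀ x : X, (Q x : X) = Pbar x := fun x => rfl
  have hQnorm : ∀ x : X, ‖Q x‖ = ‖Pbar x‖ := fun x => rfl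
  -- Pbar fixes S
  have hfix : ∀ s : X, s ∈ S → Pbar s = s := by
    intro s hs
    have h : s ∈ Set.range Pbar := by rw [hrangebar]; exact hs
    obtain ⟨y, hy⟩ := h
    rw [← hy, hproj]
  -- key identity : β x σ = b (Q x) σ
  have key : ∀ (x : X) (σ : S), β x σ = b (Q x) σ := by
    intro x σ
    have hx : x ∈ V ⊔ S := by rw [hsum]; trivial
    obtain ⟨v, hv, s, hs, rfl⟩ := Submodule.mem_sup.mp hx
    have h2 : Q (v + s) = P ⟨v, hv⟩ + ⟨s, hs⟩ := by
      apply Subtype.ext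
      have : Pbar (v + s) = (P ⟨v, hv⟩ : X) + s := by
        rw [map_add, hext ⟨v, hv⟩, hfix s hs]
      simpa [hQ] using this
    have h1 : β (v + s) σ = b (P ⟨v, hv⟩) σ + b (⟨s, hs⟩ : S) σ := by
      rw [map_add, LinearMap.add_apply, hβV ⟨v, hv⟩ σ, hβS ⟨s, hs⟩ σ]
    rw [h1, h2, map_add, LinearMap.add_apply]
  -- nondegeneracy : b is injective, hence bijective, hence flip is bijective
  have hker : LinearMap.ker b = ⊥ :=
    LinearMap.ker_eq_bot'.mpr fun s hsz => hb s fun σ => by rw [hsz]; rfl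
  have hBinj : Function.Injective b := LinearMap.ker_eq_bot.mp hker
  have hdim : Module.finrank ℝ S = Module.finrank ℝ (Module.Dual ℝ S) :=
    (Subspace.dual_finrank_eq).symm
  have hBsurj : Function.Surjective (b : S →ₗ[ℝ] Module.Dual ℝ S) :=
    (LinearMap.injective_iff_surjective_of_finrank_eq_finrank hdim).mp hBinj
  have hflip_inj : Function.Injective (b.flip : S →ₗ[ℝ] Module.Dual ℝ S) := by
    rw [← LinearMap.ker_eq_bot, LinearMap.ker_eq_bot']
    intro σ hσz
    by_contra hσ
    obtain ⟨s, hs⟩ := hBsurj ((innerSL ℝ σ : S →L[ℝ] ℝ) : S →ₗ[ℝ] ℝ)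
    have h1 : b s σ = 0 := by
      have := LinearMap.congr_fun hσz s
      simpa using this
    have h2 : b s σ = inner ℝ σ σ := by rw [hs]; rfl
    rw [h2] at h1
    exact hσ (inner_self_eq_zero.mp h1)
  have hflip_surj : Function.Surjective (b.flip : S →ₗ[ℝ] Module.Dual ℝ S) :=
    (LinearMap.injective_iff_surjective_of_finrank_eq_finrank hdim).mp hflip_inj
  -- the functionals
  set g : S → (S →L[ℝ] ℝ) := fun σ => LinearMap.toContinuousLinearMap (b.flip σ) with hgdef
  set ℓ : S → (X →L[ℝ] ℝ) := fun σ => (g σ).comp Q with hℓdef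
  have hg_apply : ∀ (σ s : S), g σ s = b s σ := fun σ s => rfl
  have hℓ_apply : ∀ (σ : S) (x : X), ℓ σ x = β x σ := fun σ x => (key x σ).symm
  -- rewrite the sets inside the sSup
  have hnum : ∀ σ : S, sSup {c : ℝ | ∃ x : X, ‖x‖ = 1 ∧ c = β x σ} = ‖ℓ σ‖ := by
    intro σ
    have hs2 : {c : ℝ | ∃ x : X, ‖x‖ = 1 ∧ c = β x σ}
        = {c : ℝ | ∃ x : X, ‖x‖ = 1 ∧ c = ℓ σ x} := by
      ext c
      exact ⟨fun ⟨x, hx, hc⟩ => ⟨x, hx, by rw [hc, hℓ_apply]⟩,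
        fun ⟨x, hx, hc⟩ => ⟨x, hx, by rw [hc, hℓ_apply]⟩⟩
    rw [hs2, sSup_sphere_apply_eq_norm' (ℓ σ)]
  have hden : ∀ σ : S, sSup {c : ℝ | ∃ s : S, ‖s‖ = 1 ∧ c = b s σ} = ‖g σ‖ := by
    intro σ
    have hs2 : {c : ℝ | ∃ s : S, ‖s‖ = 1 ∧ c = b s σ}
        = {c : ℝ | ∃ s : S, ‖s‖ = 1 ∧ c = g σ s} := by
      ext c
      exact ⟨fun ⟨s, hs, hc⟩ => ⟨s, hs, by rw [hc, hg_apply]⟩,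
        fun ⟨s, hs, hc⟩ => ⟨s, hs, by rw [hc, hg_apply]⟩⟩
    rw [hs2, sSup_sphere_apply_eq_norm' (g σ)]
  have hseteq : {r : ℝ | ∃ σ : S, σ ≠ 0 ∧
        r = sSup {c : ℝ | ∃ x : X, ‖x‖ = 1 ∧ c = β x σ} /
          sSup {c : ℝ | ∃ s : S, ‖s‖ = 1 ∧ c = b s σ}}
      = {r : ℝ | ∃ σ : S, σ ≠ 0 ∧ r = ‖ℓ σ‖ / ‖g σ‖} := by
    ext r
    exact exists_congr fun σ => and_congr_right fun _ => by rw [hnum σ, hden σ]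
  rw [hseteq]
  set T := {r : ℝ | ∃ σ : S, σ ≠ 0 ∧ r = ‖ℓ σ‖ / ‖g σ‖} with hT
  -- positivity of ‖g σ‖ for σ ≠ 0
  have hgpos : ∀ σ : S, σ ≠ 0 → 0 < ‖g σ‖ := by
    intro σ hσ
    have hne : g σ ≠ 0 := by
      intro h
      apply hσ
      apply hflip_inj
      rw [map_zero]
      ext s
      have h2 := DFunLike.congr_fun h s
      simpa [hg_apply] using h2
    have h3 : ‖g σ‖ ≠ 0 := fun h => hne ((g σ).opNorm_zero_iff.mp h)
    exact lt_of_le_of_ne (ContinuousLinearMap.opNorm_nonneg _) (Ne.symm h3)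
  -- every element of T is ≤ ‖Pbar‖
  have hub : ∀ r ∈ T, r ≤ ‖Pbar‖ := by
    rintro r ⟨σ, hσ, rfl⟩
    rw [div_le_iff₀ (hgpos σ hσ)]
    refine (ℓ σ).opNorm_le_bound (by positivity) (fun x => ?_)
    have h1 : ℓ σ x = g σ (Q x) := rfl
    calc ‖ℓ σ x‖ = ‖g σ (Q x)‖ := by rw [h1]
      _ ≤ ‖g σ‖ * ‖Q x‖ := (g σ).le_opNorm _
      _ = ‖g σ‖ * ‖Pbar x‖ := by rw [hQnorm]
      _ ≤ ‖g σ‖ * (‖Pbar‖ * ‖x‖) :=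
          mul_le_mul_of_nonneg_left (Pbar.le_opNorm x) (norm_nonneg (g σ))
      _ = ‖Pbar‖ * ‖g σ‖ * ‖x‖ := by ring
  have hTne : T.Nonempty := ⟨‖ℓ σ₀‖ / ‖g σ₀‖, σ₀, hσ₀, rfl⟩
  have hTbdd : BddAbove T := ⟨‖Pbar‖, hub⟩
  have hTnonneg : 0 ≤ sSup T := by
    obtain ⟨r, σ, hσ, rfl⟩ := hTne
    exact le_trans (by positivity) (le_csSup hTbdd ⟨σ, hσ, rfl⟩)
  refine le_antisymm ?_ (csSup_le hTne hub)
  -- ‖Pbar‖ ≤ sSup T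
  refine Pbar.opNorm_le_bound hTnonneg (fun x => ?_)
  rcases eq_or_ne (Q x) 0 with hq | hq
  · have : Pbar x = 0 := by rw [← hQ x, hq]; rfl
    rw [this, norm_zero]
    positivity
  · set q : S := Q x with hqdef
    obtain ⟨σ, hσeq⟩ := hflip_surj ((innerSL ℝ q : S →L[ℝ] ℝ) : S →ₗ[ℝ] ℝ)
    have hbq : ∀ s : S, b s σ = inner ℝ q s := by
      intro s
      have := LinearMap.congr_fun hσeq s
      simpa using this
    have hqq : b q σ = ‖q‖ * ‖q‖ := by rw [hbq q, real_inner_self_eq_norm_mul_norm]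
    have hqpos : (0:ℝ) < ‖q‖ := norm_pos_iff.mpr hq
    have hσne : σ ≠ 0 := by
      intro h
      rw [h, map_zero] at hqq
      exact (mul_pos hqpos hqpos).ne' hqq.symm
    have hgq : ‖g σ‖ ≤ ‖q‖ := by
      refine (g σ).opNorm_le_bound hqpos.le (fun s => ?_)
      rw [hg_apply, hbq s]
      exact abs_real_inner_le_norm q s
    have hℓx : ℓ σ x = ‖q‖ * ‖q‖ := by
      have : ℓ σ x = b q σ := rfl
      rw [this, hqq]
    have h1 : ‖q‖ * ‖q‖ ≤ ‖ℓ σ‖ * ‖x‖ := by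
      calc ‖q‖ * ‖q‖ = ℓ σ x := hℓx.symm
        _ ≤ |ℓ σ x| := le_abs_self _
        _ ≤ ‖ℓ σ‖ * ‖x‖ := (ℓ σ).le_opNorm x
    have hmemT : ‖ℓ σ‖ / ‖g σ‖ ∈ T := ⟨σ, hσne, rfl⟩
    have hgp : 0 < ‖g σ‖ := hgpos σ hσne
    have h2 : ‖Pbar x‖ ≤ (‖ℓ σ‖ / ‖g σ‖) * ‖x‖ := by
      rw [← hQnorm, ← hqdef, div_mul_eq_mul_div, le_div_iff₀ hgp]
      calc ‖q‖ * ‖g σ‖ ≤ ‖q‖ * ‖q‖ := mul_le_mul_of_nonneg_left hgq hqpos.le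
        _ ≤ ‖ℓ σ‖ * ‖x‖ := h1
    exact h2.trans (mul_le_mul_of_nonneg_right (le_csSup hTbdd hmemT) (norm_nonneg x))
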